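/- Let γ be a path in [n]×[k] and φ a path in [n+k]×[k]. Then there exist a surjective monotone map s : [n+2k] → [n+k] and a path γ' in [n]×[k] with γ' ≤ γ in the path order such that E_γ ∘ φ = γ' ∘ s and, for all (i,j) ∈ [n+2k]×[k], E_γ(E_φ(i,j)) = E_{γ'}(s(i), j). -/
import Mathlib


/-- `γ` is a path in `[n] × [k]` (a simplex of maximal dimension of `Δⁿ × Δᵏ`):
it starts at `(0,0)`, ends at `(n,k)`, and each step increases exactly one
coordinate by exactly `1`.  The parameter `m` records the length of the path;
necessarily `m = n + k`. -/
def IsPath (n k m : ℕ) (γ : Fin (m + 1) → Fin (n + 1) × Fin (k + 1)) : Prop :=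
  γ 0 = (0, 0) ∧
  γ (Fin.last m) = (Fin.last n, Fin.last k) ∧
  ∀ i : Fin m,
    (((γ i.succ).1 : ℕ) = ((γ i.castSucc).1 : ℕ) + 1 ∧ (γ i.succ).2 = (γ i.castSucc).2) ∨
    ((γ i.succ).1 = (γ i.castSucc).1 ∧ ((γ i.succ).2 : ℕ) = ((γ i.castSucc).2 : ℕ) + 1)

/-- The extension `E_γ : [n+k] × [k] → [n] × [k]` of a path `γ`, given by
`E_γ(i, j) = (a_i, max (b_i) j)` where `γ i = (a_i, b_i)`. -/
def pathExt (n k m : ℕ) (γ : Fin (m + 1) → Fin (n + 1) × Fin (k + 1)) :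
    Fin (m + 1) × Fin (k + 1) → Fin (n + 1) × Fin (k + 1) :=
  fun p => ((γ p.1).1, max (γ p.1).2 p.2)

/-- The strict order on paths: `γ₁ < γ₂` if at the least index `s` where they differ the
first coordinate of `γ₁ s` is smaller than that of `γ₂ s`. -/
def pathLT (n k m : ℕ) (γ₁ γ₂ : Fin (m + 1) → Fin (n + 1) × Fin (k + 1)) : Prop :=
  ∃ s : Fin (m + 1), γ₁ s ≠ γ₂ s ∧ (∀ t : Fin (m + 1), t < s → γ₁ t = γ₂ t) ∧
    (γ₁ s).1 < (γ₂ s).1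

/-- Let `γ` be a path in `[n] × [k]` and `φ` a path in `[n+k] × [k]`.  Then there are a
surjective monotone map `s : [n+2k] → [n+k]` and a path `γ' ≤ γ` in `[n] × [k]` such that
`E_γ ∘ φ = γ' ∘ s` and `E_γ (E_φ (i, j)) = E_{γ'} (s i, j)` for all `(i, j)`. -/
lemma finValMax {m : ℕ} (a b : Fin m) : ((max a b : Fin m) : ℕ) = max (a : ℕ) (b : ℕ) :=
  Monotone.map_max (fun _ _ h => h)

lemma path_sum {n k m : ℕ} {γ : Fin (m + 1) → Fin (n + 1) × Fin (k + 1)}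
    (h : IsPath n k m γ) (i : Fin (m + 1)) : ((γ i).1 : ℕ) + ((γ i).2 : ℕ) = i := by
  induction i using Fin.induction with
  | zero => simp [h.1]
  | succ i ih =>
    rcases h.2.2 i with ⟨h1, h2⟩ | ⟨h1, h2⟩
    · have h2' : ((γ i.succ).2 : ℕ) = ((γ i.castSucc).2 : ℕ) := congrArg Fin.val h2
      simp only [Fin.val_succ, Fin.coe_castSucc] at *; omega
    · have h1' : ((γ i.succ).1 : ℕ) = ((γ i.castSucc).1 : ℕ) := congrArg Fin.val h1
      simp only [Fin.val_succ, Fin.coe_castSucc] at *; omega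

lemma path_fst_mono {n k m : ℕ} {γ : Fin (m + 1) → Fin (n + 1) × Fin (k + 1)}
    (h : IsPath n k m γ) : Monotone fun i => ((γ i).1 : ℕ) := by
  refine Fin.monotone_iff_le_succ.2 fun i => ?_
  rcases h.2.2 i with ⟨h1, _⟩ | ⟨h1, _⟩
  · omega
  · exact le_of_eq (congrArg Fin.val h1).symm

lemma path_snd_mono {n k m : ℕ} {γ : Fin (m + 1) → Fin (n + 1) × Fin (k + 1)}
    (h : IsPath n k m γ) : Monotone fun i => ((γ i).2 : ℕ) := by
  refine Fin.monotone_iff_le_succ.2 fun i => ?_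
  rcases h.2.2 i with ⟨_, h2⟩ | ⟨_, h2⟩
  · exact le_of_eq (congrArg Fin.val h2).symm
  · omega

/-- intermediate value for nat-valued monotone maps with steps ≤ 1 -/
lemma steps_surj {N : ℕ} {f : Fin (N + 1) → ℕ}
    (hstep : ∀ i : Fin N, f i.succ ≤ f i.castSucc + 1) (m : ℕ)
    (t : Fin (N + 1)) (h0 : f 0 ≤ m) (ht : m ≤ f t) : ∃ u, f u = m := by
  induction t using Fin.induction with
  | zero => exact ⟨0, le_antisymm h0 ht⟩
  | succ i ih =>
    by_cases hc : m ≤ f i.castSucc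
    · exact ih hc
    · exact ⟨i.succ, by have := hstep i; omega⟩

lemma path_step_rel {n k m : ℕ} {γ : Fin (m + 1) → Fin (n + 1) × Fin (k + 1)}
    (hγ : IsPath n k m γ) {c c' : Fin (m + 1)} (h : (c' : ℕ) = (c : ℕ) + 1) :
    (((γ c').1 : ℕ) = ((γ c).1 : ℕ) + 1 ∧ ((γ c').2 : ℕ) = ((γ c).2 : ℕ)) ∨
    (((γ c').1 : ℕ) = ((γ c).1 : ℕ) ∧ ((γ c').2 : ℕ) = ((γ c).2 : ℕ) + 1) := by
  have hc : (c : ℕ) < m := by have := c'.isLt; omega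
  have h1 : c = (⟨c, hc⟩ : Fin m).castSucc := Fin.ext rfl
  have h2 : c' = (⟨c, hc⟩ : Fin m).succ := Fin.ext (by simpa using h)
  rw [h1, h2]
  rcases hγ.2.2 ⟨c, hc⟩ with ⟨a, b⟩ | ⟨a, b⟩
  · exact Or.inl ⟨a, congrArg Fin.val b⟩
  · exact Or.inr ⟨congrArg Fin.val a, b⟩

theorem pathExt_comp_pathExt_factors (n k : ℕ)
    (γ : Fin (n + k + 1) → Fin (n + 1) × Fin (k + 1)) (hγ : IsPath n k (n + k) γ)
    (φ : Fin (n + k + k + 1) → Fin (n + k + 1) × Fin (k + 1))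
    (hφ : IsPath (n + k) k (n + k + k) φ) :
    ∃ (s : Fin (n + k + k + 1) → Fin (n + k + 1))
      (γ' : Fin (n + k + 1) → Fin (n + 1) × Fin (k + 1)),
      Monotone s ∧ Function.Surjective s ∧ IsPath n k (n + k) γ' ∧
      (γ' = γ ∨ pathLT n k (n + k) γ' γ) ∧
      (∀ i : Fin (n + k + k + 1), pathExt n k (n + k) γ (φ i) = γ' (s i)) ∧
      (∀ (i : Fin (n + k + k + 1)) (j : Fin (k + 1)),
        pathExt n k (n + k) γ (pathExt (n + k) k (n + k + k) φ (i, j)) =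
          pathExt n k (n + k) γ' (s i, j)) := by
  classical
  -- step facts for ψ = E_γ ∘ φ in ℕ coordinates
  have hstep : ∀ t : Fin (n + k + k),
      (((γ (φ t.castSucc).1).1 : ℕ) ≤ ((γ (φ t.succ).1).1 : ℕ) ∧
        max ((γ (φ t.castSucc).1).2 : ℕ) ((φ t.castSucc).2 : ℕ) ≤
          max ((γ (φ t.succ).1).2 : ℕ) ((φ t.succ).2 : ℕ)) ∧
      ((γ (φ t.succ).1).1 : ℕ) + max ((γ (φ t.succ).1).2 : ℕ) ((φ t.succ).2 : ℕ) ≤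
        ((γ (φ t.castSucc).1).1 : ℕ) + max ((γ (φ t.castSucc).1).2 : ℕ) ((φ t.castSucc).2 : ℕ)
          + 1 := by
    intro t
    rcases hφ.2.2 t with ⟨h1, h2⟩ | ⟨h1, h2⟩
    · have h2' := congrArg Fin.val h2
      rcases path_step_rel hγ h1 with ⟨g1, g2⟩ | ⟨g1, g2⟩ <;> omega
    · rw [h1]; omega
  set S : Fin (n + k + k + 1) → ℕ :=
    fun t => ((γ (φ t).1).1 : ℕ) + max ((γ (φ t).1).2 : ℕ) ((φ t).2 : ℕ) with hS
  have hSmono : Monotone S := by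
    refine Fin.monotone_iff_le_succ.2 fun t => ?_
    have h := hstep t
    simp only [hS]
    omega
  have hS0 : S 0 = 0 := by simp [hS, hφ.1, hγ.1]
  have hSlast : S (Fin.last (n + k + k)) = n + k := by
    simp [hS, hφ.2.1, hγ.2.1]
  have hSle : ∀ t, S t ≤ n + k := fun t => hSlast ▸ hSmono (Fin.le_last t)
  set s : Fin (n + k + k + 1) → Fin (n + k + 1) :=
    fun t => ⟨S t, Nat.lt_succ_of_le (hSle t)⟩ with hs
  have hsval : ∀ t, ((s t : Fin (n + k + 1)) : ℕ) = S t := fun t => rfl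
  have hsmono : Monotone s := fun x y h => by
    simp only [hs, Fin.mk_le_mk]; exact hSmono h
  have hssurj : Function.Surjective s := by
    intro m
    obtain ⟨u, hu⟩ := steps_surj (f := S)
      (fun i => by have := hstep i; simp only [hS]; omega) (m : ℕ) (Fin.last _)
      (by rw [hS0]; exact Nat.zero_le _) (by rw [hSlast]; exact Nat.lt_succ_iff.mp m.isLt)
    exact ⟨u, Fin.ext (by simp [hs, hu])⟩
  have hmonoA : Monotone (fun t => ((γ (φ t).1).1 : ℕ)) :=
    Fin.monotone_iff_le_succ.2 fun t => (hstep t).1.1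
  have hmonoB : Monotone (fun t => max ((γ (φ t).1).2 : ℕ) ((φ t).2 : ℕ)) :=
    Fin.monotone_iff_le_succ.2 fun t => (hstep t).1.2
  have hfib : ∀ t1 t2 : Fin (n + k + k + 1), S t1 = S t2 →
      pathExt n k (n + k) γ (φ t1) = pathExt n k (n + k) γ (φ t2) := by
    have key : ∀ u v : Fin (n + k + k + 1), u ≤ v → S u = S v →
        pathExt n k (n + k) γ (φ u) = pathExt n k (n + k) γ (φ v) := by
      intro u v huv hsv
      have h1 := hmonoA huv
      have h2 := hmonoB huv
      simp only [hS] at hsv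
      simp only at h1 h2
      refine Prod.ext (Fin.ext ?_) (Fin.ext ?_)
      · show ((γ (φ u).1).1 : ℕ) = ((γ (φ v).1).1 : ℕ)
        omega
      · show ((max (γ (φ u).1).2 (φ u).2 : Fin (k + 1)) : ℕ) =
          ((max (γ (φ v).1).2 (φ v).2 : Fin (k + 1)) : ℕ)
        rw [finValMax, finValMax]; omega
    intro t1 t2 hSeq
    rcases le_total t1 t2 with h | h
    · exact key _ _ h hSeq
    · exact (key _ _ h hSeq.symm).symm
  set g : Fin (n + k + 1) → Fin (n + k + k + 1) := Function.surjInv hssurj with hg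
  set γ' : Fin (n + k + 1) → Fin (n + 1) × Fin (k + 1) :=
    fun m => pathExt n k (n + k) γ (φ (g m)) with hγ'def
  have hgval : ∀ m : Fin (n + k + 1), S (g m) = (m : ℕ) := by
    intro m
    have := congrArg Fin.val (Function.surjInv_eq hssurj m)
    simpa [hs, hg] using this
  have hkey : ∀ t, pathExt n k (n + k) γ (φ t) = γ' (s t) := by
    intro t
    exact hfib t (g (s t)) (by rw [hgval (s t), hsval])
  -- γ' is a path
  have hpath' : IsPath n k (n + k) γ' := by
    refine ⟨?_, ?_, ?_⟩
    · show pathExt n k (n + k) γ (φ (g 0)) = (0, 0)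
      rw [hfib (g 0) 0 (by rw [hgval, hS0]; simp)]
      simp [pathExt, hφ.1, hγ.1]
    · show pathExt n k (n + k) γ (φ (g (Fin.last (n + k)))) = (Fin.last n, Fin.last k)
      rw [hfib (g (Fin.last (n + k))) (Fin.last (n + k + k))
        (by rw [hgval, hSlast]; rfl)]
      simp [pathExt, hφ.2.1, hγ.2.1]
    · intro i
      have h1 : S (g i.castSucc) = (i : ℕ) := hgval _
      have h2 : S (g i.succ) = (i : ℕ) + 1 := by rw [hgval]; simp
      have huv : g i.castSucc ≤ g i.succ := by
        by_contra hcon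
        push_neg at hcon
        have := hSmono hcon.le
        omega
      have hA := hmonoA huv
      have hB := hmonoB huv
      simp only at hA hB
      simp only [hS] at h1 h2
      have hsplit :
          (((γ (φ (g i.succ)).1).1 : ℕ) = ((γ (φ (g i.castSucc)).1).1 : ℕ) + 1 ∧
            max ((γ (φ (g i.succ)).1).2 : ℕ) ((φ (g i.succ)).2 : ℕ) =
              max ((γ (φ (g i.castSucc)).1).2 : ℕ) ((φ (g i.castSucc)).2 : ℕ)) ∨
          (((γ (φ (g i.succ)).1).1 : ℕ) = ((γ (φ (g i.castSucc)).1).1 : ℕ) ∧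
            max ((γ (φ (g i.succ)).1).2 : ℕ) ((φ (g i.succ)).2 : ℕ) =
              max ((γ (φ (g i.castSucc)).1).2 : ℕ) ((φ (g i.castSucc)).2 : ℕ) + 1) := by
        omega
      rcases hsplit with ⟨e1, e2⟩ | ⟨e1, e2⟩
      · left
        constructor
        · show ((γ (φ (g i.succ)).1).1 : ℕ) = ((γ (φ (g i.castSucc)).1).1 : ℕ) + 1
          exact e1
        · refine Fin.ext ?_
          show ((max (γ (φ (g i.succ)).1).2 (φ (g i.succ)).2 : Fin (k + 1)) : ℕ) =
            ((max (γ (φ (g i.castSucc)).1).2 (φ (g i.castSucc)).2 : Fin (k + 1)) : ℕ)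
          rw [finValMax, finValMax]; exact e2
      · right
        constructor
        · exact Fin.ext e1
        · show ((max (γ (φ (g i.succ)).1).2 (φ (g i.succ)).2 : Fin (k + 1)) : ℕ) =
            ((max (γ (φ (g i.castSucc)).1).2 (φ (g i.castSucc)).2 : Fin (k + 1)) : ℕ) + 1
          rw [finValMax, finValMax]; exact e2
  -- γ' is below γ
  have hle : ∀ m : Fin (n + k + 1), ((γ' m).1 : ℕ) ≤ ((γ m).1 : ℕ) := by
    intro m
    have h1 := path_sum hγ (φ (g m)).1
    have h2 := hgval m
    simp only [hS] at h2
    have hcm : (φ (g m)).1 ≤ m := by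
      rw [Fin.le_def]; omega
    exact path_fst_mono hγ hcm
  have horder : γ' = γ ∨ pathLT n k (n + k) γ' γ := by
    by_cases heq : γ' = γ
    · exact Or.inl heq
    · right
      have hex : ∃ N : ℕ, ∃ hN : N < n + k + 1, γ' ⟨N, hN⟩ ≠ γ ⟨N, hN⟩ := by
        obtain ⟨m, hm⟩ := Function.ne_iff.mp heq
        exact ⟨m, m.isLt, by simpa using hm⟩
      obtain ⟨hN, hne⟩ := Nat.find_spec hex
      refine ⟨⟨Nat.find hex, hN⟩, hne, ?_, ?_⟩
      · intro t ht
        by_contra hcon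
        exact Nat.find_min hex (show (t : ℕ) < Nat.find hex from ht)
          ⟨t.isLt, by simpa using hcon⟩
      · have h1 := hle ⟨Nat.find hex, hN⟩
        have h2 := path_sum hγ (⟨Nat.find hex, hN⟩ : Fin (n + k + 1))
        have h3 := path_sum hpath' (⟨Nat.find hex, hN⟩ : Fin (n + k + 1))
        rcases lt_or_eq_of_le h1 with h | h
        · exact Fin.lt_def.mpr h
        · exact absurd (Prod.ext (Fin.ext h) (Fin.ext (by omega))) hne
  refine ⟨s, γ', hsmono, hssurj, hpath', horder, hkey, ?_⟩
  intro i j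
  have h := (hkey i).symm
  simp only [pathExt] at h ⊢
  rw [h]
  simp [max_assoc]
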